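/- For a finite simplicial complex, the squared chain norm is a Lyapunov function for the generator of the cycle-valued random walk restricted to the recurrence class of a k-cycle X_0: for every σ in the recurrence class, A(‖·‖²)(σ) ≤ -λ_m ‖σ‖² + (k+2)² |S_{k+1}| λ_M / (4 λ_m) + 2 λ_m ‖P_ker X_0‖², where λ_m and λ_M are the smallest positive and largest eigenvalues of L_k^↑ and P_ker is the orthogonal projection onto ker L_k^↑. -/

import Mathlib

open scoped RealInnerProductSpace

set_option maxHeartbeats 1000000

/-- The squared chain norm is a Lyapunov function for the generator of the cycle-valued
random walk on the recurrence class of a `k`-cycle `X₀`.  Here `E` is the (finite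
dimensional) Hilbert space `C_k` of `k`-chains, `S` indexes the positively oriented
`(k+1)`-simplexes, `bd τ = ∂_{k+1} τ` (of squared norm `k+2`), and
`L = ∂_{k+1}∂_{k+1}^*` is the up-Laplacian; the generator sums over both orientations
`±τ`.  The constants `λ_m` and `λ_M` are the smallest positive and the largest eigenvalues
of `L`, characterised by their quadratic-form bounds; `P_ker` is the orthogonal projection
onto `ker L`.  States `σ` in the recurrence class of `X₀` satisfy `P_ker σ = P_ker X₀`. -/
theorem lyapunov_bound
    {E : Type*} [NormedAddCommGroup E] [InnerProductSpace ℝ E] [FiniteDimensional ℝ E]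
    {S : Type*} [Fintype S] (bd : S → E) (k : ℕ)
    (hbd : ∀ τ : S, ‖bd τ‖ ^ 2 = (k : ℝ) + 2)
    (L : E →L[ℝ] E) (hL : L = ∑ τ : S, (innerSL ℝ (bd τ)).smulRight (bd τ))
    (lamm lamM : ℝ) (hlamm_pos : 0 < lamm)
    (hlamm : ∀ x ∈ (LinearMap.ker (L : E →ₗ[ℝ] E))ᗮ, lamm * ‖x‖ ^ 2 ≤ ⟪L x, x⟫)
    (hlamM : ∀ x : E, ⟪L x, x⟫ ≤ lamM * ‖x‖ ^ 2)
    (X0 σ : E)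
    (hσ : (Submodule.orthogonalProjectionOnto (LinearMap.ker (L : E →ₗ[ℝ] E)) σ : E)
        = (Submodule.orthogonalProjectionOnto (LinearMap.ker (L : E →ₗ[ℝ] E)) X0 : E)) :
    ∑ τ : S, ((‖σ - bd τ‖ ^ 2 - ‖σ‖ ^ 2) * max ⟪bd τ, σ⟫ 0
        + (‖σ - (-(bd τ))‖ ^ 2 - ‖σ‖ ^ 2) * max ⟪-(bd τ), σ⟫ 0)
      ≤ - lamm * ‖σ‖ ^ 2
        + ((k : ℝ) + 2) ^ 2 * (Fintype.card S) * lamM / (4 * lamm)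
        + 2 * lamm * ‖(Submodule.orthogonalProjectionOnto (LinearMap.ker (L : E →ₗ[ℝ] E)) X0 : E)‖ ^ 2 := by
  have hquad : ∀ x y : E, ⟪L x, y⟫ = ∑ τ : S, ⟪bd τ, x⟫ * ⟪bd τ, y⟫ := by
    intro x y; rw [hL]
    simp [ContinuousLinearMap.sum_apply, sum_inner, real_inner_smul_left]
  set p : E := (Submodule.orthogonalProjectionOnto (LinearMap.ker (L : E →ₗ[ℝ] E)) σ : E) with hp_def
  have hpmem : p ∈ LinearMap.ker (L : E →ₗ[ℝ] E) := SetLike.coe_mem _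
  have hLp : L p = 0 := LinearMap.mem_ker.1 hpmem
  have hbp : ∀ τ : S, ⟪bd τ, p⟫ = 0 := by
    have h0 : ∑ τ : S, ⟪bd τ, p⟫ * ⟪bd τ, p⟫ = 0 := by
      rw [← hquad p p, hLp, inner_zero_left]
    intro τ
    have := (Finset.sum_eq_zero_iff_of_nonneg
      (fun τ _ => mul_self_nonneg (⟪bd τ, p⟫ : ℝ))).1 h0 τ (Finset.mem_univ τ)
    exact mul_self_eq_zero.1 this
  set q : E := σ - p with hq_def
  have hqmem : q ∈ (LinearMap.ker (L : E →ₗ[ℝ] E))ᗮ := Submodule.sub_starProjection_mem_orthogonal σ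
  have hσpq : σ = p + q := by rw [hq_def]; abel
  have hnorm : ‖σ‖ ^ 2 = ‖p‖ ^ 2 + ‖q‖ ^ 2 := by
    rw [hσpq, norm_add_sq_real, Submodule.inner_right_of_mem_orthogonal hpmem hqmem]
    ring
  have hbq : ∀ τ : S, ⟪bd τ, σ⟫ = ⟪bd τ, q⟫ := by
    intro τ; rw [hσpq, inner_add_right, hbp, zero_add]
  have hLσ : ⟪L σ, σ⟫ = ⟪L q, q⟫ := by
    rw [hquad, hquad]
    exact Finset.sum_congr rfl (fun τ _ => by rw [hbq])
  have hlow : lamm * ‖q‖ ^ 2 ≤ ⟪L σ, σ⟫ := hLσ ▸ hlamm q hqmem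
  -- pointwise bound
  have hpoint : ∀ τ : S,
      (‖σ - bd τ‖ ^ 2 - ‖σ‖ ^ 2) * max ⟪bd τ, σ⟫ 0
        + (‖σ - (-(bd τ))‖ ^ 2 - ‖σ‖ ^ 2) * max ⟪-(bd τ), σ⟫ 0
      ≤ ((k : ℝ) + 2) ^ 2 / 4 - ⟪bd τ, σ⟫ * ⟪bd τ, σ⟫ := by
    intro τ
    have h1 : ‖σ - bd τ‖ ^ 2 = ‖σ‖ ^ 2 - 2 * ⟪σ, bd τ⟫ + ‖bd τ‖ ^ 2 :=
      norm_sub_sq_real σ (bd τ)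
    have h2 : ‖σ - (-(bd τ))‖ ^ 2 = ‖σ‖ ^ 2 + 2 * ⟪σ, bd τ⟫ + ‖bd τ‖ ^ 2 := by
      rw [sub_neg_eq_add]; exact norm_add_sq_real σ (bd τ)
    have h3 : ⟪σ, bd τ⟫ = ⟪bd τ, σ⟫ := real_inner_comm (bd τ) σ
    have hn := hbd τ
    rw [h1, h2, h3, inner_neg_left, hn]
    rcases le_total 0 (⟪bd τ, σ⟫ : ℝ) with h | h
    · rw [max_eq_left h, max_eq_right (neg_nonpos_of_nonneg h)]
      nlinarith [sq_nonneg (((k : ℝ) + 2) / 2 - ⟪bd τ, σ⟫)]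
    · rw [max_eq_right h, max_eq_left (neg_nonneg_of_nonpos h)]
      nlinarith [sq_nonneg (((k : ℝ) + 2) / 2 + ⟪bd τ, σ⟫)]
  have hsum : ∑ τ : S, ((‖σ - bd τ‖ ^ 2 - ‖σ‖ ^ 2) * max ⟪bd τ, σ⟫ 0
        + (‖σ - (-(bd τ))‖ ^ 2 - ‖σ‖ ^ 2) * max ⟪-(bd τ), σ⟫ 0)
      ≤ (Fintype.card S : ℝ) * (((k : ℝ) + 2) ^ 2 / 4) - ⟪L σ, σ⟫ := by
    calc ∑ τ : S, ((‖σ - bd τ‖ ^ 2 - ‖σ‖ ^ 2) * max ⟪bd τ, σ⟫ 0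
        + (‖σ - (-(bd τ))‖ ^ 2 - ‖σ‖ ^ 2) * max ⟪-(bd τ), σ⟫ 0)
        ≤ ∑ τ : S, (((k : ℝ) + 2) ^ 2 / 4 - ⟪bd τ, σ⟫ * ⟪bd τ, σ⟫) :=
          Finset.sum_le_sum (fun τ _ => hpoint τ)
      _ = (Fintype.card S : ℝ) * (((k : ℝ) + 2) ^ 2 / 4) - ⟪L σ, σ⟫ := by
          rw [Finset.sum_sub_distrib, Finset.sum_const, hquad σ σ]
          simp [mul_comm]
  rcases isEmpty_or_nonempty S with hS | hS
  · -- empty case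
    have hL0 : L = 0 := by rw [hL]; simp
    have hσmem : σ ∈ LinearMap.ker (L : E →ₗ[ℝ] E) := by rw [hL0]; simp
    have hpσ : p = σ := Submodule.starProjection_eq_self_iff.2 hσmem
    have hcard : (Fintype.card S : ℝ) = 0 := by simp
    have hPX0 : ‖(Submodule.orthogonalProjectionOnto (LinearMap.ker (L : E →ₗ[ℝ] E)) X0 : E)‖ = ‖σ‖ := by
      rw [← hσ, hpσ]
    rw [Finset.univ_eq_empty, Finset.sum_empty, hcard, hPX0]
    have h4 : (0:ℝ) < 4 * lamm := by linarith
    have : ((k : ℝ) + 2) ^ 2 * 0 * lamM / (4 * lamm) = 0 := by ring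
    rw [this]
    nlinarith [sq_nonneg ‖σ‖]
  · -- nonempty case : lamm ≤ lamM
    obtain ⟨τ0⟩ := hS
    have hmM : lamm ≤ lamM := by
      set x : E := bd τ0 - (Submodule.orthogonalProjectionOnto (LinearMap.ker (L : E →ₗ[ℝ] E)) (bd τ0) : E) with hx_def
      have hxmem : x ∈ (LinearMap.ker (L : E →ₗ[ℝ] E))ᗮ := Submodule.sub_starProjection_mem_orthogonal (bd τ0)
      have hxne : x ≠ 0 := by
        intro hx0
        have hb0mem : bd τ0 ∈ LinearMap.ker (L : E →ₗ[ℝ] E) := by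
          have : bd τ0 = (Submodule.orthogonalProjectionOnto (LinearMap.ker (L : E →ₗ[ℝ] E)) (bd τ0) : E) := by
            rw [← sub_eq_zero]; exact hx0
          rw [this]; exact SetLike.coe_mem _
        have hLb0 : L (bd τ0) = 0 := LinearMap.mem_ker.1 hb0mem
        have h0 : ∑ τ : S, ⟪bd τ, bd τ0⟫ * ⟪bd τ, bd τ0⟫ = 0 := by
          rw [← hquad (bd τ0) (bd τ0), hLb0, inner_zero_left]
        have hτ0 : ⟪bd τ0, bd τ0⟫ * ⟪bd τ0, bd τ0⟫
            ≤ ∑ τ : S, ⟪bd τ, bd τ0⟫ * ⟪bd τ, bd τ0⟫ :=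
          Finset.single_le_sum (f := fun τ => (⟪bd τ, bd τ0⟫ : ℝ) * ⟪bd τ, bd τ0⟫)
            (fun τ _ => mul_self_nonneg _) (Finset.mem_univ τ0)
        have hbb : (⟪bd τ0, bd τ0⟫ : ℝ) = (k : ℝ) + 2 := by
          rw [real_inner_self_eq_norm_sq]; exact hbd τ0
        rw [hbb, h0] at hτ0
        nlinarith [Nat.cast_nonneg (α := ℝ) k]
      have hxpos : 0 < ‖x‖ ^ 2 := pow_pos (norm_pos_iff.mpr hxne) 2
      exact le_of_mul_le_mul_right ((hlamm x hxmem).trans (hlamM x)) hxpos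
    have hPX0 : ‖(Submodule.orthogonalProjectionOnto (LinearMap.ker (L : E →ₗ[ℝ] E)) X0 : E)‖ = ‖p‖ := by
      rw [← hσ]
    rw [hPX0]
    have hcard : (0:ℝ) ≤ (Fintype.card S : ℝ) := Nat.cast_nonneg _
    have hn2 : (0:ℝ) ≤ ((k : ℝ) + 2) ^ 2 := sq_nonneg _
    have key : (Fintype.card S : ℝ) * (((k : ℝ) + 2) ^ 2 / 4)
        ≤ ((k : ℝ) + 2) ^ 2 * (Fintype.card S) * lamM / (4 * lamm) := by
      rw [le_div_iff₀ (by linarith : (0:ℝ) < 4 * lamm)]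
      have heq : (Fintype.card S : ℝ) * (((k : ℝ) + 2) ^ 2 / 4) * (4 * lamm)
          = (((k : ℝ) + 2) ^ 2 * (Fintype.card S)) * lamm := by ring
      rw [heq]
      exact mul_le_mul_of_nonneg_left hmM (mul_nonneg hn2 hcard)
    have hql : lamm * ‖q‖ ^ 2 = lamm * ‖σ‖ ^ 2 - lamm * ‖p‖ ^ 2 := by
      have hq2 : ‖q‖ ^ 2 = ‖σ‖ ^ 2 - ‖p‖ ^ 2 := by linarith
      rw [hq2]; ring
    have hpn : 0 ≤ lamm * ‖p‖ ^ 2 := mul_nonneg hlamm_pos.le (sq_nonneg _)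
    linarith [hsum, hlow, key, hql, hpn]
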